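/- Let k be an algebraically closed field of characteristic χ > 0 and let f_1,...,f_m ∈ k[t_1,...,t_n] be algebraically independent over k. Then every polynomial g determined by (f_1,...,f_m) satisfies: there exists ν ∈ ℕ₀ such that g^(χ^ν) ∈ k(f_1,...,f_m) ∩ k[t_1,...,t_n]. -/

import Mathlib

open MvPolynomial TensorProduct

/-- `p` vanishes at every point of `A`. -/
def VanishesOn {k : Type*} [CommSemiring k] {m : ℕ} (A : Set (Fin m → k))
    (p : MvPolynomial (Fin m) k) : Prop :=
  ∀ a ∈ A, eval a p = 0

/-- The Zariski closure of `A ⊆ k^m` has dimension at most `d` (with `dim ∅ = -1`):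
for every index set `S` with more than `d` elements, the vanishing ideal of `A`
contains a nonzero polynomial supported on the variables in `S`. -/
def ZClosureDimLE {k : Type*} [CommSemiring k] {m : ℕ} (A : Set (Fin m → k)) (d : ℤ) : Prop :=
  ∀ S : Finset (Fin m), d < (S.card : ℤ) →
    ∃ p : MvPolynomial (Fin m) k, p ≠ 0 ∧
      p ∈ MvPolynomial.supported k (↑S : Set (Fin m)) ∧ VanishesOn A p

/-- The range of the polynomial map `k^n → k^m` induced by `f`. -/
def polyRange {k : Type*} [CommSemiring k] {m n : ℕ}
    (f : Fin m → MvPolynomial (Fin n) k) : Set (Fin m → k) :=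
  Set.range fun a : Fin n → k => fun i => eval a (f i)

/-- `f` is almost surjective on `k`: the Zariski closure of the complement of the range
of the induced map `k^n → k^m` has dimension at most `m - 2`. -/
def AlmostSurj {k : Type*} [CommSemiring k] {m n : ℕ}
    (f : Fin m → MvPolynomial (Fin n) k) : Prop :=
  ZClosureDimLE (polyRange f)ᶜ ((m : ℤ) - 2)

/-- `g` is determined by `f`. -/
def Determined {k : Type*} [CommSemiring k] {m n : ℕ}
    (f : Fin m → MvPolynomial (Fin n) k) (g : MvPolynomial (Fin n) k) : Prop :=
  ∀ a b : Fin n → k, (∀ i, eval a (f i) = eval b (f i)) → eval a g = eval b g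

/-- In a field extension `L/F`, if `x ⊗ 1 = 1 ⊗ x` in `L ⊗[F] L`, then `x` comes from `F`. -/
lemma exists_of_tmul_eq_tmul {F L : Type*} [Field F] [Field L] [Algebra F L] {x : L}
    (h : x ⊗ₜ[F] (1 : L) = 1 ⊗ₜ[F] x) : ∃ c : F, algebraMap F L c = x := by
  by_contra hc
  push_neg at hc
  have hx : x ∉ Submodule.span F {(1 : L)} := by
    intro hm
    rw [Submodule.mem_span_singleton] at hm
    obtain ⟨c, hc'⟩ := hm
    exact hc c (by rw [Algebra.algebraMap_eq_smul_one]; exact hc')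
  set q := (Submodule.span F {(1 : L)}).mkQ with hq
  have hqx : q x ≠ 0 := by
    rw [hq, Submodule.mkQ_apply, ne_eq, Submodule.Quotient.mk_eq_zero]
    exact hx
  obtain ⟨μ, hμ⟩ : ∃ μ : Module.Dual F (L ⧸ Submodule.span F {(1 : L)}), μ (q x) ≠ 0 := by
    by_contra hall
    push_neg at hall
    exact hqx ((Module.forall_dual_apply_eq_zero_iff F _).1 hall)
  set lam : L →ₗ[F] F := ((μ (q x))⁻¹ • μ).comp q with hlam
  have hlam1 : lam (1 : L) = 0 := by
    have h1 : q (1 : L) = 0 := by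
      rw [hq, Submodule.mkQ_apply, Submodule.Quotient.mk_eq_zero]
      exact Submodule.mem_span_singleton_self _
    simp [hlam, h1]
  have hlamx : lam x = 1 := by
    simp [hlam, inv_mul_cancel₀ hμ]
  set Λ : L ⊗[F] L →ₗ[F] L := TensorProduct.lift ((LinearMap.lsmul F L).comp lam) with hΛ
  have h2 := congrArg Λ h
  rw [hΛ] at h2
  rw [TensorProduct.lift.tmul, TensorProduct.lift.tmul] at h2
  simp only [LinearMap.comp_apply, LinearMap.lsmul_apply, hlam1, hlamx, one_smul, zero_smul] at h2
  exact one_ne_zero h2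

set_option maxHeartbeats 1000000 in
set_option synthInstance.maxHeartbeats 400000 in
theorem stmt12 {k : Type*} [Field k] [IsAlgClosed k] (χ : ℕ) [CharP k χ] (hχ : 0 < χ)
    {m n : ℕ} (f : Fin m → MvPolynomial (Fin n) k) (hind : AlgebraicIndependent k f)
    (g : MvPolynomial (Fin n) k) (hg : Determined f g) :
    ∃ ν : ℕ, ∃ r s : MvPolynomial (Fin m) k,
      aeval f s ≠ 0 ∧ g ^ χ ^ ν * aeval f s = aeval f r := by
  classical
  have hprime : χ.Prime := (CharP.char_is_prime_or_zero k χ).resolve_right (by omega)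
  haveI : Fact χ.Prime := ⟨hprime⟩
  -- the doubled polynomial ring
  let ι₁ : MvPolynomial (Fin n) k →+* MvPolynomial (Fin n ⊕ Fin n) k :=
    (rename Sum.inl : MvPolynomial (Fin n) k →ₐ[k] _).toRingHom
  let ι₂ : MvPolynomial (Fin n) k →+* MvPolynomial (Fin n ⊕ Fin n) k :=
    (rename Sum.inr : MvPolynomial (Fin n) k →ₐ[k] _).toRingHom
  let I : Ideal (MvPolynomial (Fin n ⊕ Fin n) k) :=
    Ideal.span (Set.range fun i => ι₁ (f i) - ι₂ (f i))
  -- Step 1: Nullstellensatz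
  have hgI : ι₁ g - ι₂ g ∈ I.radical := by
    rw [← MvPolynomial.vanishingIdeal_zeroLocus_eq_radical (K := k)]
    rw [mem_vanishingIdeal_iff]
    intro x hx
    rw [mem_zeroLocus_iff] at hx
    have hfab : ∀ i, eval (x ∘ Sum.inl) (f i) = eval (x ∘ Sum.inr) (f i) := by
      intro i
      have hgen := hx _ (Ideal.subset_span ⟨i, rfl⟩)
      rw [map_sub] at hgen
      rw [← sub_eq_zero]
      simpa [ι₁, ι₂, eval_rename] using hgen
    have hG := hg _ _ hfab
    rw [map_sub]
    simp only [ι₁, ι₂, AlgHom.toRingHom_eq_coe, RingHom.coe_coe, eval_rename, aeval_rename]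
    exact sub_eq_zero.mpr hG
  rw [Ideal.mem_radical_iff] at hgI
  obtain ⟨N, hN⟩ := hgI
  refine ⟨N, ?_⟩
  -- Step 2: Frobenius
  have hNQ : N ≤ χ ^ N := (Nat.lt_pow_self (n := N) hprime.one_lt).le
  have hpow : (ι₁ g - ι₂ g) ^ χ ^ N ∈ I := by
    have heq : (ι₁ g - ι₂ g) ^ χ ^ N
        = (ι₁ g - ι₂ g) ^ (χ ^ N - N) * (ι₁ g - ι₂ g) ^ N := by
      rw [← pow_add]; congr 1; omega
    rw [heq]; exact Ideal.mul_mem_left _ _ hN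
  have hfrob : ι₁ (g ^ χ ^ N) - ι₂ (g ^ χ ^ N) ∈ I := by
    rw [map_pow, map_pow, ← sub_pow_char_pow]
    exact hpow
  -- Step 3: map to L ⊗[F] L
  let B := MvPolynomial (Fin m) k
  let R := MvPolynomial (Fin n) k
  let L := FractionRing R
  let φ₀ : B →+* R := (aeval f : B →ₐ[k] R).toRingHom
  have hφ₀ : Function.Injective φ₀ := hind
  let ψ : B →+* L := (algebraMap R L).comp φ₀
  have hψ : Function.Injective ψ := (IsFractionRing.injective R L).comp hφ₀
  let F := FractionRing B
  let φ : F →+* L := IsFractionRing.lift hψ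
  letI : Algebra F L := φ.toAlgebra
  have halg : ∀ b : B, algebraMap F L (algebraMap B F b) = ψ b := fun b =>
    IsFractionRing.lift_algebraMap hψ b
  have htmul : ∀ b : B, (ψ b) ⊗ₜ[F] (1 : L) = 1 ⊗ₜ[F] (ψ b) := by
    intro b
    rw [← halg, Algebra.algebraMap_eq_smul_one, TensorProduct.smul_tmul]
  -- the comparison homomorphism Φ
  let η₁ : R →+* L ⊗[F] L :=
    (Algebra.TensorProduct.includeLeftRingHom).comp (algebraMap R L)
  let η₂ : R →+* L ⊗[F] L :=
    (Algebra.TensorProduct.includeRight.toRingHom).comp (algebraMap R L)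
  let Φ : MvPolynomial (Fin n ⊕ Fin n) k →+* L ⊗[F] L :=
    eval₂Hom (η₁.comp (C : k →+* R)) (Sum.elim (fun i => η₁ (X i)) (fun i => η₂ (X i)))
  have hΦ₁ : ∀ p : R, Φ (ι₁ p) = η₁ p := by
    intro p
    have : Φ.comp ι₁ = η₁ := by
      apply MvPolynomial.ringHom_ext
      · intro c; simp [Φ, ι₁]
      · intro i; simp [Φ, ι₁]
    exact DFunLike.congr_fun this p
  have hΦ₂ : ∀ p : R, Φ (ι₂ p) = η₂ p := by
    intro p
    have : Φ.comp ι₂ = η₂ := by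
      apply MvPolynomial.ringHom_ext
      · intro c
        simp only [Φ, ι₂, RingHom.comp_apply, AlgHom.toRingHom_eq_coe, RingHom.coe_coe,
          rename_C, eval₂Hom_C]
        simp only [η₁, η₂, RingHom.comp_apply, AlgHom.toRingHom_eq_coe, RingHom.coe_coe,
          Algebra.TensorProduct.includeLeftRingHom_apply,
          Algebra.TensorProduct.includeRight_apply]
        have : algebraMap R L (C c) = ψ (C (c : k) : B) := by
          simp [ψ, φ₀]; rw [aeval_C, algebraMap_eq]
        rw [this, htmul]
      · intro i; simp [Φ, ι₂]
    exact DFunLike.congr_fun this p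
  -- Φ kills the ideal I
  have hker : ∀ x ∈ I, Φ x = 0 := by
    intro x hxI
    have hle : I ≤ RingHom.ker Φ := by
      rw [Ideal.span_le]
      rintro _ ⟨i, rfl⟩
      rw [SetLike.mem_coe, RingHom.mem_ker, map_sub, hΦ₁, hΦ₂]
      -- η₁ (f i) = η₂ (f i) since f i is in the image of F
      have hfi : φ₀ (X i) = f i := aeval_X f i
      have h1 : algebraMap R L (f i) = algebraMap F L (algebraMap B F (X i)) := by
        rw [halg]; simp [ψ, hfi]
      have h2 : algebraMap R L (f i) = ψ (X i : B) := by simp [ψ, hfi]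
      simp only [η₁, η₂, RingHom.comp_apply, AlgHom.toRingHom_eq_coe, RingHom.coe_coe,
        Algebra.TensorProduct.includeLeftRingHom_apply,
        Algebra.TensorProduct.includeRight_apply, h2]
      rw [sub_eq_zero, htmul]
    exact hle hxI
  have h0 := hker _ hfrob
  rw [map_sub, hΦ₁, hΦ₂, sub_eq_zero] at h0
  simp only [η₁, η₂, RingHom.comp_apply, AlgHom.toRingHom_eq_coe, RingHom.coe_coe,
    Algebra.TensorProduct.includeLeftRingHom_apply,
    Algebra.TensorProduct.includeRight_apply] at h0
  obtain ⟨c, hc⟩ := exists_of_tmul_eq_tmul h0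
  obtain ⟨⟨r, s⟩, hrs⟩ := IsLocalization.mk'_surjective (nonZeroDivisors B) c
  refine ⟨r, s, ?_, ?_⟩
  · intro h0'
    have : (s : B) = 0 := hφ₀ (by rw [map_zero]; exact h0')
    exact nonZeroDivisors.coe_ne_zero s this
  · have hspec : c * algebraMap B F (s : B) = algebraMap B F r := by
      rw [← hrs]; exact IsLocalization.mk'_spec F r s
    have := congrArg (algebraMap F L) hspec
    rw [map_mul, hc, halg, halg] at this
    apply IsFractionRing.injective R L
    rw [map_mul]
    exact this
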